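/- Let F : ℚ̂ → R be a Farey recursive function with constant determinant 1 over a commutative ring R. For α ∈ ℚ with parents γ_L, γ_R, let β_{-k} = γ_L ⊕^{k-1} α for k ≥ 1 and β_k = γ_R ⊕^k α for k ≥ 0, and let M_α = [[0,1],[-1,F(α)]]. Then for every n ∈ ℤ, M_α^n · (F(β_0), F(β_1))ᵀ = (F(β_n), F(β_{n+1}))ᵀ. -/

import Mathlib

/-- Two fractions `a/b`, `c/d` form a Farey pair when `a*d - b*c = ±1`. -/
def FareyPair (a b : ℤ × ℤ) : Prop :=
  a.1 * b.2 - a.2 * b.1 = 1 ∨ a.1 * b.2 - a.2 * b.1 = -1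

/-- An extended rational: a fraction in lowest terms with nonnegative denominator,
where the fraction with denominator `0` is `1/0 = ∞`. -/
def IsExtRat (v : ℤ × ℤ) : Prop :=
  0 ≤ v.2 ∧ Int.gcd v.1 v.2 = 1 ∧ (v.2 = 0 → v.1 = 1)

/-- The set `ℚ̂ = ℚ ∪ {1/0}` of extended rationals. -/
def ExtRat : Type := {v : ℤ × ℤ // IsExtRat v}

/-- If `F : ℚ̂ → R` is an FRF with constant determinant `1`
(`F(γ ⊕² α) = -F(γ) + F(α)F(γ ⊕ α)` for all Farey pairs), `α ∈ ℚ` has parents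
`γ_L, γ_R`, and `β` wraps around the boundary triangle of `α`
(`β_{-k} = γ_L ⊕^{k-1} α`, `β_k = γ_R ⊕^k α`), then with
`M_α = [[0,1],[-1,F(α)]]` one has `M_α^n (F β_0, F β_1)ᵀ = (F β_n, F β_{n+1})ᵀ`
for every integer `n`. -/
theorem FRF_det_one_wraps (R : Type*) [CommRing R] (F : ExtRat → R)
    (hF : ∀ α γ : ExtRat, FareyPair α.val γ.val →
      ∀ m m2 : ExtRat, m.val = γ.val + α.val → m2.val = γ.val + α.val + α.val →
        F m2 = -F γ + F α * F m)
    (α γL γR : ExtRat) (hα : 0 < α.val.2)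
    (hpar : FareyPair γL.val γR.val) (hmed : α.val = γL.val + γR.val)
    (hleft : γL.val.1 * α.val.2 < γL.val.2 * α.val.1)
    (hright : α.val.1 * γR.val.2 < α.val.2 * γR.val.1)
    (β : ℤ → ExtRat)
    (hβpos : ∀ n : ℤ, 0 ≤ n → (β n).val = γR.val + n • α.val)
    (hβneg : ∀ n : ℤ, n < 0 → (β n).val = γL.val + (-n - 1) • α.val) :
    ∀ n : ℤ,
      ((!![0, 1; -1, F α] : Matrix (Fin 2) (Fin 2) R) ^ n).mulVec ![F (β 0), F (β 1)] =
        ![F (β n), F (β (n + 1))] := by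
  have hm1 : α.val.1 = γL.val.1 + γR.val.1 := by rw [hmed]; rfl
  have hm2 : α.val.2 = γL.val.2 + γR.val.2 := by rw [hmed]; rfl
  have hfst : ∀ n : ℤ, 0 ≤ n → (β n).val.1 = γR.val.1 + n * α.val.1 := by
    intro n hn; rw [hβpos n hn]; simp
  have hsnd : ∀ n : ℤ, 0 ≤ n → (β n).val.2 = γR.val.2 + n * α.val.2 := by
    intro n hn; rw [hβpos n hn]; simp
  have hfstn : ∀ n : ℤ, n < 0 → (β n).val.1 = γL.val.1 + (-n - 1) * α.val.1 := by
    intro n hn; rw [hβneg n hn]; simp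
  have hsndn : ∀ n : ℤ, n < 0 → (β n).val.2 = γL.val.2 + (-n - 1) * α.val.2 := by
    intro n hn; rw [hβneg n hn]; simp
  have prodext : ∀ v w : ℤ × ℤ, v.1 = w.1 → v.2 = w.2 → v = w := by
    intro v w h1 h2; exact Prod.ext h1 h2
  have hβm1 : β (-1) = γL := by
    refine Subtype.ext (prodext _ _ ?_ ?_)
    · rw [hfstn (-1) (by norm_num)]; ring
    · rw [hsndn (-1) (by norm_num)]; ring
  have hβ0 : β 0 = γR := by
    refine Subtype.ext (prodext _ _ ?_ ?_)
    · rw [hfst 0 le_rfl]; ring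
    · rw [hsnd 0 le_rfl]; ring
  have fppos : ∀ n : ℤ, 0 ≤ n → FareyPair α.val (β n).val := by
    intro n hn
    have h : α.val.1 * (β n).val.2 - α.val.2 * (β n).val.1
        = γL.val.1 * γR.val.2 - γL.val.2 * γR.val.1 := by
      rw [hfst n hn, hsnd n hn, hm1, hm2]; ring
    unfold FareyPair
    rw [h]; exact hpar
  have fpneg : ∀ n : ℤ, n < 0 → FareyPair α.val (β n).val := by
    intro n hn
    have h : α.val.1 * (β n).val.2 - α.val.2 * (β n).val.1
        = -(γL.val.1 * γR.val.2 - γL.val.2 * γR.val.1) := by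
      rw [hfstn n hn, hsndn n hn, hm1, hm2]; ring
    unfold FareyPair
    rw [h]
    rcases hpar with h' | h' <;> [right; left] <;> linarith
  have fpsymm : FareyPair γR.val γL.val := by
    unfold FareyPair at *
    rcases hpar with h' | h' <;> [right; left] <;> linear_combination -h'
  -- the recurrence
  have key : ∀ n : ℤ, F (β (n + 2)) = -F (β n) + F α * F (β (n + 1)) := by
    intro n
    rcases le_or_gt 0 n with hn | hn
    · refine hF α (β n) (fppos n hn) (β (n + 1)) (β (n + 2)) ?_ ?_
      · refine prodext _ _ ?_ ?_ <;>
          simp only [Prod.fst_add, Prod.snd_add]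
        · rw [hfst (n+1) (by omega), hfst n hn]; ring
        · rw [hsnd (n+1) (by omega), hsnd n hn]; ring
      · refine prodext _ _ ?_ ?_ <;>
          simp only [Prod.fst_add, Prod.snd_add]
        · rw [hfst (n+2) (by omega), hfst n hn]; ring
        · rw [hsnd (n+2) (by omega), hsnd n hn]; ring
    · rcases eq_or_lt_of_le (by omega : n ≤ -1) with h1 | h1
      · -- n = -1
        subst h1
        norm_num
        rw [hβm1, hβ0]
        have h := hF γR γL fpsymm α (β 1) (by rw [hmed]) ?_
        · rw [h]; ring
        · refine prodext _ _ ?_ ?_ <;>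
            simp only [Prod.fst_add, Prod.snd_add]
          · rw [hfst 1 (by norm_num), hm1]; ring
          · rw [hsnd 1 (by norm_num), hm2]; ring
      rcases eq_or_lt_of_le (by omega : n ≤ -2) with h2 | h2
      · -- n = -2
        subst h2
        norm_num
        rw [hβm1, hβ0]
        have h := hF γL γR hpar α (β (-2)) (by rw [hmed]; exact add_comm _ _) ?_
        · rw [h]; ring
        · refine prodext _ _ ?_ ?_ <;>
            simp only [Prod.fst_add, Prod.snd_add]
          · rw [hfstn (-2) (by norm_num), hm1]; ring
          · rw [hsndn (-2) (by norm_num), hm2]; ring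
      · -- n ≤ -3
        have h := hF α (β (n + 2)) (fpneg (n+2) (by omega)) (β (n + 1)) (β n) ?_ ?_
        · linear_combination h
        · refine prodext _ _ ?_ ?_ <;>
            simp only [Prod.fst_add, Prod.snd_add]
          · rw [hfstn (n+1) (by omega), hfstn (n+2) (by omega)]; ring
          · rw [hsndn (n+1) (by omega), hsndn (n+2) (by omega)]; ring
        · refine prodext _ _ ?_ ?_ <;>
            simp only [Prod.fst_add, Prod.snd_add]
          · rw [hfstn n (by omega), hfstn (n+2) (by omega)]; ring
          · rw [hsndn n (by omega), hsndn (n+2) (by omega)]; ring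
  -- now the matrix part
  set M : Matrix (Fin 2) (Fin 2) R := !![0, 1; -1, F α] with hM
  have hdet : IsUnit M.det := by
    rw [hM]
    simp [Matrix.det_fin_two_of]
  have hmul : ∀ x y : R, M.mulVec ![x, y] = ![y, -x + F α * y] := by
    intro x y
    funext j
    fin_cases j <;>
      simp [hM, Matrix.mulVec, dotProduct, Fin.sum_univ_two] <;> ring
  intro n
  induction n using Int.induction_on with
  | zero => simp
  | succ i ih =>
      have : M ^ ((i : ℤ) + 1) = M * M ^ (i : ℤ) := by
        rw [add_comm, Matrix.zpow_add hdet, zpow_one]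
      rw [this, ← Matrix.mulVec_mulVec, ih, hmul]
      rw [show (i:ℤ) + 1 + 1 = (i:ℤ) + 2 by ring]
      funext j
      fin_cases j <;> simp
      · linear_combination -key i
  | pred i ih =>
      have hstep : M ^ (-(i : ℤ)) = M * M ^ (-(i : ℤ) - 1) := by
        conv_lhs => rw [show -(i:ℤ) = 1 + (-(i:ℤ) - 1) by ring]
        rw [Matrix.zpow_add hdet, zpow_one]
      set w := (M ^ (-(i:ℤ) - 1)).mulVec ![F (β 0), F (β 1)] with hw
      have hMw : M.mulVec w = ![F (β (-(i:ℤ))), F (β (-(i:ℤ) + 1))] := by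
        rw [hw, Matrix.mulVec_mulVec, ← hstep, ih]
      have hww : M.mulVec w = ![w 1, -(w 0) + F α * w 1] := by
        have := hmul (w 0) (w 1)
        rw [show ![w 0, w 1] = w by funext j; fin_cases j <;> rfl] at this
        exact this
      have h1 : w 1 = F (β (-(i:ℤ))) := by
        have := congrFun (hww.symm.trans hMw) 0
        simpa using this
      have h0 : w 0 = F (β (-(i:ℤ) - 1)) := by
        have h2 : -(w 0) + F α * w 1 = F (β (-(i:ℤ) + 1)) := by
          have := congrFun (hww.symm.trans hMw) 1
          simpa using this
        have hk := key (-(i:ℤ) - 1)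
        rw [show -(i:ℤ) - 1 + 2 = -(i:ℤ) + 1 by ring,
            show -(i:ℤ) - 1 + 1 = -(i:ℤ) by ring] at hk
        rw [h1] at h2
        linear_combination -h2 - hk
      rw [hw] at h0 h1
      funext j
      fin_cases j <;> simp [show -(i:ℤ) - 1 + 1 = -(i:ℤ) by ring]
      · exact h0
      · exact h1
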